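/- Let B = (b_{ij}) be an n×n real matrix with n ≥ 2 such that b_{ij} b_{ji} ≥ 0 for all i < j. Then for each k, σ₁(B)·σ₁(B|k) ≥ σ₂(B) + (n/(2(n−1)))·(σ₁(B|k))², with equality if and only if all diagonal entries b_{ii} with i ≠ k are equal and b_{ij} b_{ji} = 0 for all i ≠ j. -/

import Mathlib

set_option maxHeartbeats 1000000


open Finset

lemma sigma_aux_pair (n : ℕ) (x : Fin n → ℝ) :
    2 * (∑ i, ∑ j ∈ univ.filter (fun j => i < j), x i * x j) + ∑ i, (x i)^2
      = (∑ i, x i)^2 := by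
  have h0 : (∑ i, x i)^2 = ∑ i, ∑ j, x i * x j := by
    rw [sq, Finset.sum_mul_sum]
  have h1 : ∀ i : Fin n, (∑ j, x i * x j)
      = (∑ j ∈ univ.filter (fun j => i < j), x i * x j)
        + ((∑ j ∈ univ.filter (fun j => j < i), x i * x j) + x i * x i) := by
    intro i
    rw [← Finset.sum_filter_add_sum_filter_not univ (fun j => i < j)]
    congr 1
    have hins : univ.filter (fun j => ¬ i < j) = insert i (univ.filter (fun j => j < i)) := by
      ext j
      simp only [mem_filter, mem_univ, true_and, not_lt, mem_insert]
      constructor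
      · intro h; rcases lt_or_eq_of_le h with h | h
        · exact Or.inr h
        · exact Or.inl h
      · rintro (rfl | h) <;> [exact le_rfl; exact h.le]
    rw [hins, Finset.sum_insert (by simp)]
    ring
  have hswap : (∑ i, ∑ j ∈ univ.filter (fun j => j < i), x i * x j)
      = ∑ i, ∑ j ∈ univ.filter (fun j => i < j), x i * x j := by
    rw [Finset.sum_comm' (t' := univ) (s' := fun j => univ.filter (fun i => j < i))
      (by intro i j; simp)]
    simp_rw [mul_comm]
  rw [h0]
  simp_rw [h1]
  rw [Finset.sum_add_distrib, Finset.sum_add_distrib, hswap]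
  simp_rw [← sq]
  ring

lemma sigma_aux_spread (n : ℕ) (S : Finset (Fin n)) (x : Fin n → ℝ) :
    ∑ i ∈ S, ∑ j ∈ S, (x i - x j)^2
      = 2 * S.card * (∑ i ∈ S, (x i)^2) - 2 * (∑ i ∈ S, x i)^2 := by
  have h1 : ∀ i, ∑ j ∈ S, (x i - x j)^2
      = S.card * (x i)^2 + (∑ j ∈ S, (x j)^2) - 2 * x i * (∑ j ∈ S, x j) :=
    fun i =>
    calc ∑ j ∈ S, (x i - x j)^2
        = ∑ j ∈ S, ((x i)^2 + (x j)^2 - 2 * x i * x j) :=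
          Finset.sum_congr rfl fun j _ => by ring
      _ = _ := by
          rw [Finset.sum_sub_distrib, Finset.sum_add_distrib, Finset.sum_const,
            nsmul_eq_mul, ← Finset.mul_sum]
  simp_rw [h1]
  rw [Finset.sum_sub_distrib, Finset.sum_add_distrib, Finset.sum_const, nsmul_eq_mul,
    ← Finset.sum_mul, ← Finset.mul_sum, ← Finset.mul_sum]
  ring

theorem sigma_inequality (n : ℕ) (hn : 2 ≤ n) (B : Matrix (Fin n) (Fin n) ℝ)
    (hB : ∀ i j : Fin n, i < j → 0 ≤ B i j * B j i) (k : Fin n) :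
    (∑ i, ∑ j ∈ univ.filter (fun j => i < j), (B i i * B j j - B i j * B j i))
        + ((n : ℝ) / (2 * ((n : ℝ) - 1))) * ((∑ i, B i i) - B k k) ^ 2
      ≤ (∑ i, B i i) * ((∑ i, B i i) - B k k)
    ∧ ((∑ i, B i i) * ((∑ i, B i i) - B k k)
        = (∑ i, ∑ j ∈ univ.filter (fun j => i < j), (B i i * B j j - B i j * B j i))
          + ((n : ℝ) / (2 * ((n : ℝ) - 1))) * ((∑ i, B i i) - B k k) ^ 2
      ↔ (∀ i j : Fin n, i ≠ k → j ≠ k → B i i = B j j)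
        ∧ (∀ i j : Fin n, i ≠ j → B i j * B j i = 0)) := by
  have hn2 : (2:ℝ) ≤ (n:ℝ) := by exact_mod_cast hn
  have hnpos : (0:ℝ) < (n:ℝ) - 1 := by linarith
  have hne : ((n:ℝ) - 1) ≠ 0 := ne_of_gt hnpos
  set s : ℝ := ∑ i, B i i with hs
  set a : ℝ := B k k with ha
  set S : Finset (Fin n) := univ.erase k with hSdef
  have hcard : (S.card : ℝ) = (n:ℝ) - 1 := by
    have h1 : S.card = n - 1 := by
      rw [hSdef, Finset.card_erase_of_mem (mem_univ k), card_univ, Fintype.card_fin]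
    rw [h1, Nat.cast_sub (by omega), Nat.cast_one]
  have ht : (∑ i ∈ S, B i i) = s - a := by
    rw [hSdef, Finset.sum_erase_eq_sub (mem_univ k), hs, ha]
  set u : ℝ := ∑ i, (B i i)^2 with hu
  have hv : (∑ i ∈ S, (B i i)^2) = u - a^2 := by
    rw [hSdef, Finset.sum_erase_eq_sub (mem_univ k), hu, ha]
  set E : ℝ := ∑ i ∈ S, ∑ j ∈ S, (B i i - B j j)^2 with hEdef
  have hE : E = 2 * ((n:ℝ) - 1) * (u - a^2) - 2 * (s - a)^2 := by
    rw [hEdef, sigma_aux_spread n S (fun i => B i i), hcard, ht, hv]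
  have hEnn : 0 ≤ E :=
    Finset.sum_nonneg fun i _ => Finset.sum_nonneg fun j _ => sq_nonneg _
  set P : ℝ := ∑ i, ∑ j ∈ univ.filter (fun j => i < j), B i j * B j i with hPdef
  have hPnn : 0 ≤ P :=
    Finset.sum_nonneg fun i _ => Finset.sum_nonneg fun j hj =>
      hB i j (by simpa using (mem_filter.mp hj).2)
  set pair : ℝ := ∑ i, ∑ j ∈ univ.filter (fun j => i < j), B i i * B j j with hpairdef
  have hpair : 2 * pair + u = s^2 := by
    rw [hpairdef, hu, hs]; exact sigma_aux_pair n (fun i => B i i)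
  have hsplit : (∑ i, ∑ j ∈ univ.filter (fun j => i < j), (B i i * B j j - B i j * B j i))
      = pair - P := by
    rw [hpairdef, hPdef, ← Finset.sum_sub_distrib]
    exact Finset.sum_congr rfl fun i _ => by rw [← Finset.sum_sub_distrib]
  have hpair' : pair = (s^2 - u)/2 := by linarith
  have hkey : s * (s - a) - pair - ((n:ℝ)/(2*((n:ℝ)-1))) * (s - a)^2
      = E / (4 * ((n:ℝ)-1)) := by
    rw [hpair', hE]
    field_simp
    ring
  have hQnn : 0 ≤ E / (4 * ((n:ℝ)-1)) := div_nonneg hEnn (by linarith)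
  constructor
  · rw [hsplit]
    linarith [hQnn, hPnn, hkey]
  · constructor
    · intro heq
      rw [hsplit] at heq
      have hzero : E / (4 * ((n:ℝ)-1)) + P = 0 := by linarith
      have hE0 : E = 0 := by
        have hP0 : E / (4 * ((n:ℝ)-1)) = 0 := by linarith
        field_simp at hP0
        simpa using hP0
      have hPz : P = 0 := by linarith
      constructor
      · intro i j hi hj
        have hi' : i ∈ S := by rw [hSdef]; exact mem_erase.mpr ⟨hi, mem_univ i⟩
        have hj' : j ∈ S := by rw [hSdef]; exact mem_erase.mpr ⟨hj, mem_univ j⟩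
        have h2 : ∑ j ∈ S, (B i i - B j j)^2 = 0 :=
          (Finset.sum_eq_zero_iff_of_nonneg
            (fun i _ => Finset.sum_nonneg fun j _ => sq_nonneg _)).mp hE0 i hi'
        have h3 : (B i i - B j j)^2 = 0 :=
          (Finset.sum_eq_zero_iff_of_nonneg (fun j _ => sq_nonneg _)).mp h2 j hj'
        have := sq_eq_zero_iff.mp h3
        linarith
      · intro i j hij
        have hlt : ∀ p q : Fin n, p < q → B p q * B q p = 0 := by
          intro p q hpq
          have h2 : ∑ j ∈ univ.filter (fun j => p < j), B p j * B j p = 0 :=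
            (Finset.sum_eq_zero_iff_of_nonneg
              (fun i _ => Finset.sum_nonneg fun j hj =>
                hB i j (by simpa using (mem_filter.mp hj).2))).mp hPz p (mem_univ p)
          exact (Finset.sum_eq_zero_iff_of_nonneg
            (fun j hj => hB p j (by simpa using (mem_filter.mp hj).2))).mp h2 q
            (mem_filter.mpr ⟨mem_univ q, hpq⟩)
        rcases lt_or_gt_of_ne hij with h | h
        · exact hlt i j h
        · rw [mul_comm]; exact hlt j i h
    · rintro ⟨hd, hp⟩
      have hE0 : E = 0 := by
        rw [hEdef]
        refine Finset.sum_eq_zero fun i hi => Finset.sum_eq_zero fun j hj => ?_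
        have hi' : i ≠ k := (mem_erase.mp (hSdef ▸ hi)).1
        have hj' : j ≠ k := (mem_erase.mp (hSdef ▸ hj)).1
        rw [hd i j hi' hj', sub_self]
        simp
      have hP0 : P = 0 := by
        rw [hPdef]
        refine Finset.sum_eq_zero fun i _ => Finset.sum_eq_zero fun j hj => ?_
        have : i < j := by simpa using (mem_filter.mp hj).2
        exact hp i j (ne_of_lt this)
      rw [hsplit, hP0, sub_zero]
      have : E / (4 * ((n:ℝ)-1)) = 0 := by rw [hE0]; simp
      linarith [hkey, this]
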